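/- The trace τ on the noncommutative cylinder is positive: τ(f* •_ℏ f) ≥ 0 for all f, with τ(f* •_ℏ f) = Σ_k ∫_ℝ |f_{-k}(u + kℏ)|² du. -/

import Mathlib

open MeasureTheory

/-- The twisted product `(f • g)_n(u) = ∑_k f_k(u) g_{n-k}(u + kℏ)`. -/
noncomputable def ncProd (ℏ : ℝ) (f g : ℤ → ℝ → ℂ) : ℤ → ℝ → ℂ :=
  fun n u => ∑' k : ℤ, f k u * g (n - k) (u + k * ℏ)

/-- The involution `(f*)_n(u) = conj (f_{-n}(u + nℏ))`. -/
noncomputable def ncStar (ℏ : ℝ) (f : ℤ → ℝ → ℂ) : ℤ → ℝ → ℂ :=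
  fun n u => starRingEnd ℂ (f (-n) (u + n * ℏ))

/-- The trace `τ(f) = ∫_ℝ f₀(u) du`. -/
noncomputable def tau (f : ℤ → ℝ → ℂ) : ℂ := ∫ u : ℝ, f 0 u

/-- `τ` is positive: `τ(f* •_ℏ f) = ∑_k ∫ |f_{-k}(u + kℏ)|² du ≥ 0`. -/
theorem tau_positive (ℏ : ℝ) (f : ℤ → SchwartzMap ℝ ℂ)
    (hf : (Function.support f).Finite) :
    tau (ncProd ℏ (ncStar ℏ (fun n => ⇑(f n))) (fun n => ⇑(f n)))
        = ((∑' k : ℤ, ∫ u : ℝ, ‖f (-k) (u + k * ℏ)‖ ^ 2 : ℝ) : ℂ) ∧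
    0 ≤ (tau (ncProd ℏ (ncStar ℏ (fun n => ⇑(f n))) (fun n => ⇑(f n)))).re := by
  classical
  set T : Finset ℤ := hf.toFinset.image (fun n => -n) with hT
  have hzero : ∀ k : ℤ, k ∉ T → f (-k) = 0 := by
    intro k hk
    by_contra h
    exact hk (Finset.mem_image.mpr ⟨-k, hf.mem_toFinset.mpr h, by simp⟩)
  have hint : ∀ k : ℤ, Integrable (fun u : ℝ => ‖(f (-k)) (u + k * ℏ)‖ ^ 2) := by
    intro k
    have h1 : Integrable (fun u : ℝ => (f (-k)) (u + (k : ℝ) * ℏ)) :=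
      ((f (-k)).integrable).comp_add_right _
    obtain ⟨C, hC⟩ := (f (-k)).decay 0 0
    have hb : ∀ x : ℝ, ‖(f (-k)) x‖ ≤ C := by
      intro x
      have := hC.2 x
      simpa [norm_iteratedFDeriv_zero] using this
    have : Integrable ((fun u : ℝ => ‖(f (-k)) (u + k * ℏ)‖) *
        (fun u : ℝ => ‖(f (-k)) (u + k * ℏ)‖)) := by
      apply h1.norm.bdd_mul (c := C)
      · exact (continuous_norm.comp
          ((f (-k)).continuous.comp (continuous_add_right _))).aestronglyMeasurable
      · refine Filter.Eventually.of_forall fun x => ?_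
        simpa [Real.norm_eq_abs, abs_of_nonneg (norm_nonneg _)] using hb (x + k * ℏ)
    exact this.congr (Filter.Eventually.of_forall fun u => (sq _).symm)
  have hpt : ∀ u : ℝ, (∑' k : ℤ, (starRingEnd ℂ) ((f (-k)) (u + k * ℏ)) *
      (f (0 - k)) (u + k * ℏ))
      = ∑ k ∈ T, ((‖(f (-k)) (u + k * ℏ)‖ ^ 2 : ℝ) : ℂ) := by
    intro u
    rw [tsum_eq_sum (s := T) (fun k hk => by rw [hzero k hk]; simp)]
    refine Finset.sum_congr rfl fun k _ => ?_
    have h0 : (0 : ℤ) - k = -k := by ring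
    rw [h0, mul_comm, Complex.mul_conj, Complex.normSq_eq_norm_sq, Complex.ofReal_pow]
  have key : tau (ncProd ℏ (ncStar ℏ (fun n => ⇑(f n))) (fun n => ⇑(f n)))
      = ((∑' k : ℤ, ∫ u : ℝ, ‖f (-k) (u + k * ℏ)‖ ^ 2 : ℝ) : ℂ) := by
    have : tau (ncProd ℏ (ncStar ℏ (fun n => ⇑(f n))) (fun n => ⇑(f n)))
        = ∫ u : ℝ, ∑ k ∈ T, ((‖(f (-k)) (u + k * ℏ)‖ ^ 2 : ℝ) : ℂ) := by
      unfold tau ncProd ncStar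
      exact integral_congr_ae (Filter.Eventually.of_forall hpt)
    rw [this, integral_finset_sum T
      (f := fun k (u : ℝ) => ((‖(f (-k)) (u + k * ℏ)‖ ^ 2 : ℝ) : ℂ))
      (fun k _ => by exact (hint k).ofReal)]
    have h2 : (∑' k : ℤ, ∫ u : ℝ, ‖f (-k) (u + k * ℏ)‖ ^ 2 : ℝ)
        = ∑ k ∈ T, ∫ u : ℝ, ‖f (-k) (u + k * ℏ)‖ ^ 2 := by
      refine tsum_eq_sum (fun k hk => ?_)
      rw [hzero k hk]; simp
    rw [h2, Complex.ofReal_sum]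
    exact Finset.sum_congr rfl fun k _ => integral_ofReal
  refine ⟨key, ?_⟩
  rw [key, Complex.ofReal_re]
  refine tsum_nonneg fun k => integral_nonneg fun u => sq_nonneg _
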